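/- arXiv:1310.4469 — 5 statements merged into one kernel-verified Lean document; each statement's English description precedes it below -/
import Mathlib

section
/- All the cohomology groups H^j(A^•) are finite if and only if, for every j, both ker f^j and coker f^j are finite; and in that case the alternating products agree: ∏_j (#H^j(A^•))^{(−1)^j} = ∏_j (#ker(f^j) / #coker(f^j))^{(−1)^j}, an equality of positive rational numbers (both products have only finitely many factors different from 1). -/
open Filter

section Aux
variable {A₀ A₁ A₂ B₁ B₂ C₀ C₁ : Type*}
  [AddCommGroup A₀] [AddCommGroup A₁] [AddCommGroup A₂]
  [AddCommGroup B₁] [AddCommGroup B₂] [AddCommGroup C₀] [AddCommGroup C₁]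

theorem aux52 (g₁ : B₁ →+ A₁) (g₂ : B₂ →+ A₂) (h₀ : A₀ →+ C₀) (h₁ : A₁ →+ C₁)
    (f₀ : C₀ →+ B₁) (f₁ : C₁ →+ B₂)
    (hg₁ : Function.Injective g₁) (hg₂ : Function.Injective g₂)
    (hh₀ : Function.Surjective h₀) (hh₁ : Function.Surjective h₁)
    (hex : g₁.range = h₁.ker) :
    (Finite ((g₂.comp (f₁.comp h₁)).ker ⧸
        ((g₁.comp (f₀.comp h₀)).range.addSubgroupOf (g₂.comp (f₁.comp h₁)).ker)) ↔
      Finite f₁.ker ∧ Finite (B₁ ⧸ f₀.range)) ∧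
    Nat.card ((g₂.comp (f₁.comp h₁)).ker ⧸
        ((g₁.comp (f₀.comp h₀)).range.addSubgroupOf (g₂.comp (f₁.comp h₁)).ker))
      = Nat.card f₁.ker * Nat.card (B₁ ⧸ f₀.range) := by
  set d₀ : A₀ →+ A₁ := g₁.comp (f₀.comp h₀) with hd₀
  set d₁ : A₁ →+ A₂ := g₂.comp (f₁.comp h₁) with hd₁
  set R : AddSubgroup d₁.ker := d₀.range.addSubgroupOf d₁.ker with hRdef
  -- the map ker d₁ → ker f₁
  have hmem : ∀ x : d₁.ker, (h₁.comp d₁.ker.subtype) x ∈ f₁.ker := by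
    rintro ⟨x, hx⟩
    have hx' : g₂ (f₁ (h₁ x)) = 0 := hx
    exact AddMonoidHom.mem_ker.mpr (hg₂ (show g₂ (f₁ (h₁ x)) = g₂ 0 by rw [hx', map_zero]))
  set Φ : d₁.ker →+ f₁.ker :=
    AddMonoidHom.codRestrict (h₁.comp d₁.ker.subtype) f₁.ker hmem with hΦdef
  have hΦsurj : Function.Surjective Φ := by
    rintro ⟨c, hc⟩
    obtain ⟨a, ha⟩ := hh₁ c
    have hak : a ∈ d₁.ker := by
      show g₂ (f₁ (h₁ a)) = 0
      rw [ha, AddMonoidHom.mem_ker.mp hc, map_zero]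
    exact ⟨⟨a, hak⟩, Subtype.ext ha⟩
  have hRker : ∀ x ∈ R, Φ x = 0 := by
    rintro ⟨x, hx⟩ hxR
    obtain ⟨a, ha⟩ := AddSubgroup.mem_addSubgroupOf.mp hxR
    apply Subtype.ext
    show h₁ x = 0
    have : x ∈ h₁.ker := by
      rw [← hex]
      exact ⟨f₀ (h₀ a), ha⟩
    exact this
  set Φbar : (d₁.ker ⧸ R) →+ f₁.ker := QuotientAddGroup.lift R Φ hRker with hΦbar
  have hΦbarsurj : Function.Surjective Φbar := by
    intro y
    obtain ⟨x, hx⟩ := hΦsurj y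
    exact ⟨QuotientAddGroup.mk x, hx⟩
  -- the map B₁ → H
  have hgb : ∀ b : B₁, g₁ b ∈ d₁.ker := by
    intro b
    show g₂ (f₁ (h₁ (g₁ b))) = 0
    have hb : h₁ (g₁ b) = 0 := by
      have : g₁ b ∈ h₁.ker := hex ▸ ⟨b, rfl⟩
      exact this
    rw [hb, map_zero, map_zero]
  set θ : B₁ →+ (d₁.ker ⧸ R) :=
    (QuotientAddGroup.mk' R).comp (g₁.codRestrict d₁.ker hgb) with hθ
  have hθker : θ.ker = f₀.range := by
    ext b
    constructor
    · intro hb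
      have hb' : (⟨g₁ b, hgb b⟩ : d₁.ker) ∈ R :=
        (QuotientAddGroup.eq_zero_iff _).mp (AddMonoidHom.mem_ker.mp hb)
      obtain ⟨a, ha⟩ := AddSubgroup.mem_addSubgroupOf.mp hb'
      exact ⟨h₀ a, hg₁ ha⟩
    · rintro ⟨c, rfl⟩
      obtain ⟨a, rfl⟩ := hh₀ c
      apply AddMonoidHom.mem_ker.mpr
      apply (QuotientAddGroup.eq_zero_iff _).mpr
      exact AddSubgroup.mem_addSubgroupOf.mpr ⟨a, rfl⟩
  have hθrange : θ.range = Φbar.ker := by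
    ext x
    constructor
    · rintro ⟨b, rfl⟩
      apply AddMonoidHom.mem_ker.mpr
      have : Φbar (θ b) = Φ ⟨g₁ b, hgb b⟩ := rfl
      rw [this]
      apply Subtype.ext
      show h₁ (g₁ b) = 0
      have : g₁ b ∈ h₁.ker := hex ▸ ⟨b, rfl⟩
      exact this
    · intro hx
      obtain ⟨y, rfl⟩ := QuotientAddGroup.mk'_surjective R x
      have h0 : h₁ y.1 = 0 := congrArg Subtype.val (AddMonoidHom.mem_ker.mp hx)
      have : y.1 ∈ g₁.range := by rw [hex]; exact h0
      obtain ⟨b, hb⟩ := this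
      exact ⟨b, congrArg (QuotientAddGroup.mk' R) (Subtype.ext hb)⟩
  -- isomorphisms
  have e₁ : (B₁ ⧸ f₀.range) ≃+ Φbar.ker :=
    (QuotientAddGroup.quotientAddEquivOfEq hθker.symm).trans
      ((QuotientAddGroup.quotientKerEquivRange θ).trans (AddEquiv.addSubgroupCongr hθrange))
  have e₂ : ((d₁.ker ⧸ R) ⧸ Φbar.ker) ≃+ f₁.ker :=
    QuotientAddGroup.quotientKerEquivOfSurjective Φbar hΦbarsurj
  have hcard : Nat.card (d₁.ker ⧸ R) = Nat.card f₁.ker * Nat.card (B₁ ⧸ f₀.range) := by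
    rw [AddSubgroup.card_eq_card_quotient_mul_card_addSubgroup Φbar.ker,
      Nat.card_congr e₂.toEquiv, Nat.card_congr e₁.toEquiv]
  refine ⟨?_, hcard⟩
  constructor
  · intro hH
    exact ⟨Finite.of_equiv _ e₂.toEquiv, e₁.toEquiv.finite_iff.mpr inferInstance⟩
  · rintro ⟨h1, h2⟩
    have n1 : Nonempty f₁.ker := ⟨0⟩
    have n2 : Nonempty (B₁ ⧸ f₀.range) := ⟨0⟩
    have : 0 < Nat.card (d₁.ker ⧸ R) := by
      rw [hcard]
      exact Nat.mul_pos Nat.card_pos Nat.card_pos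
    exact (Nat.card_pos_iff.mp this).2

end Aux

section
variable (A B C : ℤ → Type*) [∀ j, AddCommGroup (A j)] [∀ j, AddCommGroup (B j)]
  [∀ j, AddCommGroup (C j)]

/-- The differential `d^j := g^{j+1} ∘ f^j ∘ h^j : A^j → A^{j+1}`. -/
abbrev dMap (g : ∀ j, B j →+ A j) (h : ∀ j, A j →+ C j) (f : ∀ j, C j →+ B (j + 1)) (j : ℤ) :
    A j →+ A (j + 1) :=
  (g (j + 1)).comp ((f j).comp (h j))

/-- The cohomology `H^{j+1}(A^•) = ker d^{j+1} / im d^j` of the complex `(A^•, d)`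
(indexed here so that `cohomologyAt ... j` is the cohomology in degree `j + 1`). -/
abbrev cohomologyAt (g : ∀ j, B j →+ A j) (h : ∀ j, A j →+ C j)
    (f : ∀ j, C j →+ B (j + 1)) (j : ℤ) : Type _ :=
  (dMap A B C g h f (j + 1)).ker ⧸
    ((dMap A B C g h f j).range.addSubgroupOf (dMap A B C g h f (j + 1)).ker)

/-- **Lemma 5.2.** Given short exact sequences `0 → B^j → A^j → C^j → 0` with `A^j = 0` for
all but finitely many `j`, and maps `f^j : C^j → B^{j+1}`, with `d^j := g^{j+1} ∘ f^j ∘ h^j`: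
all the cohomology groups `H^j(A^•)` are finite if and only if all the kernels and cokernels
of the `f^j` are finite, in which case
`∏_j (#H^j(A^•))^{(-1)^j} = ∏_j (#ker f^j / #coker f^j)^{(-1)^j}`. -/
theorem finite_cohomology_iff_and_finprod_eq
    (g : ∀ j, B j →+ A j) (h : ∀ j, A j →+ C j) (f : ∀ j, C j →+ B (j + 1))
    (hg : ∀ j, Function.Injective (g j)) (hh : ∀ j, Function.Surjective (h j))
    (hexact : ∀ j, (g j).range = (h j).ker)
    (S : Finset ℤ) (hA : ∀ j ∉ S, Subsingleton (A j)) :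
    ((∀ j, Finite (cohomologyAt A B C g h f j)) ↔
      ∀ j, Finite ((f j).ker) ∧ Finite (B (j + 1) ⧸ (f j).range)) ∧
    ((∀ j, Finite ((f j).ker) ∧ Finite (B (j + 1) ⧸ (f j).range)) →
      ∏ᶠ j : ℤ, (Nat.card (cohomologyAt A B C g h f j) : ℚ) ^ ((j + 1).negOnePow : ℤ) =
        ∏ᶠ j : ℤ, ((Nat.card ((f j).ker) : ℚ) / (Nat.card (B (j + 1) ⧸ (f j).range) : ℚ)) ^
          (j.negOnePow : ℤ)) := by
  classical
  -- the key local computation, from `aux52`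
  have key : ∀ j : ℤ,
      (Finite (cohomologyAt A B C g h f j) ↔
        Finite ((f (j + 1)).ker) ∧ Finite (B (j + 1) ⧸ (f j).range)) ∧
      Nat.card (cohomologyAt A B C g h f j)
        = Nat.card ((f (j + 1)).ker) * Nat.card (B (j + 1) ⧸ (f j).range) :=
    fun j => aux52 (g (j + 1)) (g (j + 1 + 1)) (h j) (h (j + 1)) (f j) (f (j + 1))
      (hg _) (hg _) (hh _) (hh _) (hexact _)
  have hε : ∀ j : ℤ, ((j + 1).negOnePow : ℤ) = -(j.negOnePow : ℤ) := fun j => by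
    rw [Int.negOnePow_succ, Units.val_neg]
  -- triviality outside S
  have hk1 : ∀ j : ℤ, j ∉ S → (Nat.card ((f j).ker) : ℚ) = 1 := by
    intro j hj
    haveI := hA j hj
    haveI : Subsingleton (C j) := (hh j).subsingleton
    haveI : Unique ((f j).ker) := ⟨⟨0⟩, fun a => Subsingleton.elim a 0⟩
    rw [Nat.card_unique, Nat.cast_one]
  have hq1 : ∀ j : ℤ, j + 1 ∉ S → (Nat.card (B (j + 1) ⧸ (f j).range) : ℚ) = 1 := by
    intro j hj
    haveI := hA _ hj
    haveI : Subsingleton (B (j + 1)) := (hg (j + 1)).subsingleton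
    haveI : Subsingleton (B (j + 1) ⧸ (f j).range) :=
      ⟨fun a b => by
        obtain ⟨x, rfl⟩ := QuotientAddGroup.mk_surjective a
        obtain ⟨y, rfl⟩ := QuotientAddGroup.mk_surjective b
        exact congrArg _ (Subsingleton.elim x y)⟩
    haveI : Unique (B (j + 1) ⧸ (f j).range) := ⟨⟨0⟩, fun a => Subsingleton.elim a 0⟩
    rw [Nat.card_unique, Nat.cast_one]
  constructor
  · constructor
    · intro hH j
      refine ⟨?_, ((key j).1.mp (hH j)).2⟩
      obtain ⟨i, rfl⟩ : ∃ i, i + 1 = j := ⟨j - 1, by omega⟩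
      exact ((key i).1.mp (hH i)).1
    · intro hf j
      exact ((key j).1).mpr ⟨(hf (j + 1)).1, (hf j).2⟩
  · intro hf
    -- finiteness of supports
    have hTfin : ((fun s : ℤ => s - 1) '' (S : Set ℤ)).Finite := S.finite_toSet.image _
    have s1 : (Function.mulSupport fun j : ℤ =>
        (Nat.card ((f (j + 1)).ker) : ℚ) ^ ((j + 1).negOnePow : ℤ)) ⊆
        (fun s : ℤ => s - 1) '' (S : Set ℤ) := by
      intro j hj
      by_contra hjT
      have hjS : j + 1 ∉ S := fun hmem => hjT ⟨j + 1, hmem, by ring⟩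
      exact hj (by simp only [hk1 _ hjS, one_zpow])
    have s2 : (Function.mulSupport fun j : ℤ =>
        (Nat.card (B (j + 1) ⧸ (f j).range) : ℚ) ^ ((j + 1).negOnePow : ℤ)) ⊆
        (fun s : ℤ => s - 1) '' (S : Set ℤ) := by
      intro j hj
      by_contra hjT
      have hjS : j + 1 ∉ S := fun hmem => hjT ⟨j + 1, hmem, by ring⟩
      exact hj (by simp only [hq1 _ hjS, one_zpow])
    have s3 : (Function.mulSupport fun j : ℤ =>
        (Nat.card ((f j).ker) : ℚ) ^ (j.negOnePow : ℤ)) ⊆ (S : Set ℤ) := by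
      intro j hj
      by_contra hjS
      exact hj (by simp only [hk1 _ hjS, one_zpow])
    calc
      ∏ᶠ j : ℤ, (Nat.card (cohomologyAt A B C g h f j) : ℚ) ^ ((j + 1).negOnePow : ℤ)
          = ∏ᶠ j : ℤ, ((Nat.card ((f (j + 1)).ker) : ℚ) ^ ((j + 1).negOnePow : ℤ) *
            (Nat.card (B (j + 1) ⧸ (f j).range) : ℚ) ^ ((j + 1).negOnePow : ℤ)) := by
        refine finprod_congr fun j => ?_
        rw [(key j).2, Nat.cast_mul, mul_zpow]
      _ = (∏ᶠ j : ℤ, (Nat.card ((f (j + 1)).ker) : ℚ) ^ ((j + 1).negOnePow : ℤ)) *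
            ∏ᶠ j : ℤ, (Nat.card (B (j + 1) ⧸ (f j).range) : ℚ) ^ ((j + 1).negOnePow : ℤ) :=
        finprod_mul_distrib (hTfin.subset s1) (hTfin.subset s2)
      _ = (∏ᶠ j : ℤ, (Nat.card ((f j).ker) : ℚ) ^ (j.negOnePow : ℤ)) *
            ∏ᶠ j : ℤ, (Nat.card (B (j + 1) ⧸ (f j).range) : ℚ) ^ ((j + 1).negOnePow : ℤ) := by
        congr 1
        exact finprod_comp (g := fun j : ℤ => (Nat.card ((f j).ker) : ℚ) ^ (j.negOnePow : ℤ))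
          (fun j : ℤ => j + 1) ⟨fun a b hab => by simpa using hab, fun b => ⟨b - 1, by show b - 1 + 1 = b; ring⟩⟩
      _ = ∏ᶠ j : ℤ, ((Nat.card ((f j).ker) : ℚ) ^ (j.negOnePow : ℤ) *
            (Nat.card (B (j + 1) ⧸ (f j).range) : ℚ) ^ ((j + 1).negOnePow : ℤ)) :=
        (finprod_mul_distrib (S.finite_toSet.subset s3) (hTfin.subset s2)).symm
      _ = ∏ᶠ j : ℤ, ((Nat.card ((f j).ker) : ℚ) / (Nat.card (B (j + 1) ⧸ (f j).range) : ℚ)) ^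
            (j.negOnePow : ℤ) := by
        refine finprod_congr fun j => ?_
        rw [hε j, zpow_neg, div_zpow, div_eq_mul_inv]

end
end

section
/- For each j there is a short exact sequence 0 → coker(f^{j−1}) → H^j(A^•) → ker(f^j) → 0. More precisely: h^j maps ker(d^j) onto ker(f^j), so it induces a surjective homomorphism H^j(A^•) → ker(f^j); the kernel of this surjection is the image of B^j in H^j(A^•) (via g^j, noting g^j(B^j) ⊆ ker(d^j)), and g^j induces an isomorphism of coker(f^{j−1}) = B^j/range(f^{j−1}) onto this kernel. -/
section
variable (A B C : ℤ → Type*) [∀ j, AddCommGroup (A j)] [∀ j, AddCommGroup (B j)]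
  [∀ j, AddCommGroup (C j)]

/-- **From the proof of Lemma 5.2.** For each `j` there is a short exact sequence
`0 → coker f^j → H^{j+1}(A^•) → ker f^{j+1} → 0`, where the surjection `β` onto
`ker f^{j+1}` is induced by `h^{j+1}` on `ker d^{j+1}`, and the injection `α` is induced
by `g^{j+1} : B^{j+1} → A^{j+1}`. -/
theorem exists_shortExact_coker_cohomology_ker
    (g : ∀ j, B j →+ A j) (h : ∀ j, A j →+ C j) (f : ∀ j, C j →+ B (j + 1))
    (hg : ∀ j, Function.Injective (g j)) (hh : ∀ j, Function.Surjective (h j))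
    (hexact : ∀ j, (g j).range = (h j).ker) (j : ℤ) :
    ∃ (α : (B (j + 1) ⧸ (f j).range) →+ cohomologyAt A B C g h f j)
      (β : cohomologyAt A B C g h f j →+ (f (j + 1)).ker),
      Function.Injective α ∧ Function.Surjective β ∧ α.range = β.ker ∧
      (∀ x : (dMap A B C g h f (j + 1)).ker,
        ((β (QuotientAddGroup.mk x) : (f (j + 1)).ker) : C (j + 1)) = h (j + 1) (x : A (j + 1))) ∧
      (∀ (b : B (j + 1)) (x : (dMap A B C g h f (j + 1)).ker),
        (x : A (j + 1)) = g (j + 1) b →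
        α (QuotientAddGroup.mk b) = QuotientAddGroup.mk x) := by
  classical
  set K := (dMap A B C g h f (j + 1)).ker with hK
  set N := ((dMap A B C g h f j).range.addSubgroupOf K) with hN
  -- membership in K characterization
  have hKmem : ∀ x : A (j + 1), x ∈ K ↔ f (j + 1) (h (j + 1) x) = 0 := by
    intro x
    constructor
    · intro hx
      apply hg (j + 1 + 1)
      rw [map_zero]
      exact hx
    · intro hx
      show g (j + 1 + 1) (f (j + 1) (h (j + 1) x)) = 0
      rw [hx, map_zero]
  -- β₀ : K →+ ker f^{j+1}
  have hβ₀mem : ∀ x : K, h (j + 1) (x : A (j + 1)) ∈ (f (j + 1)).ker := by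
    intro x
    exact (hKmem x.1).mp x.2
  let β₀ : K →+ (f (j + 1)).ker :=
    AddMonoidHom.codRestrict ((h (j + 1)).comp K.subtype) _ hβ₀mem
  have hβ₀N : ∀ x ∈ N, β₀ x = 0 := by
    intro x hx
    obtain ⟨a, ha⟩ := hx
    apply Subtype.ext
    show h (j + 1) (x : A (j + 1)) = 0
    have hx1 : (x : A (j + 1)) = g (j + 1) (f j (h j a)) := ha.symm
    rw [hx1, ← AddMonoidHom.mem_ker, ← hexact (j + 1)]
    exact ⟨f j (h j a), rfl⟩
  let β : cohomologyAt A B C g h f j →+ (f (j + 1)).ker :=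
    QuotientAddGroup.lift N β₀ hβ₀N
  -- α₀ : B (j+1) →+ K
  have hα₀mem : ∀ b : B (j + 1), g (j + 1) b ∈ K := by
    intro b
    rw [hKmem]
    have : h (j + 1) (g (j + 1) b) = 0 := by
      rw [← AddMonoidHom.mem_ker, ← hexact (j + 1)]
      exact ⟨b, rfl⟩
    rw [this, map_zero]
  let α₀ : B (j + 1) →+ K := (g (j + 1)).codRestrict K hα₀mem
  have hα₀f : ∀ b ∈ (f j).range, (QuotientAddGroup.mk' N).comp α₀ b = 0 := by
    intro b hb
    obtain ⟨c, hc⟩ := hb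
    obtain ⟨a, ha⟩ := hh j c
    rw [AddMonoidHom.comp_apply, QuotientAddGroup.mk'_apply,
      QuotientAddGroup.eq_zero_iff]
    refine ⟨a, ?_⟩
    show g (j + 1) (f j (h j a)) = g (j + 1) b
    rw [ha, hc]
  let α : (B (j + 1) ⧸ (f j).range) →+ cohomologyAt A B C g h f j :=
    QuotientAddGroup.lift _ ((QuotientAddGroup.mk' N).comp α₀) hα₀f
  refine ⟨α, β, ?_, ?_, ?_, ?_, ?_⟩
  · -- injectivity of α
    rw [injective_iff_map_eq_zero]
    intro q hq
    induction q using QuotientAddGroup.induction_on with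
    | H b =>
      have hq' : α₀ b ∈ N := by
        rw [← QuotientAddGroup.eq_zero_iff]
        exact hq
      obtain ⟨a, ha⟩ := hq'
      have hb : b = f j (h j a) := by
        apply hg (j + 1)
        exact ha.symm
      rw [QuotientAddGroup.eq_zero_iff]
      exact ⟨h j a, hb.symm⟩
  · -- surjectivity of β
    rintro ⟨c, hc⟩
    obtain ⟨x, hx⟩ := hh (j + 1) c
    have hxK : x ∈ K := by
      rw [hKmem, hx]
      exact hc
    refine ⟨QuotientAddGroup.mk ⟨x, hxK⟩, ?_⟩
    apply Subtype.ext
    show h (j + 1) x = c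
    exact hx
  · -- range α = ker β
    ext q
    constructor
    · rintro ⟨p, rfl⟩
      induction p using QuotientAddGroup.induction_on with
      | H b =>
        show β ((QuotientAddGroup.mk' N).comp α₀ b) = 0
        apply Subtype.ext
        show h (j + 1) (g (j + 1) b) = 0
        rw [← AddMonoidHom.mem_ker, ← hexact (j + 1)]
        exact ⟨b, rfl⟩
    · intro hq
      induction q using QuotientAddGroup.induction_on with
      | H x =>
        have hx0 : h (j + 1) (x : A (j + 1)) = 0 := by
          have := Subtype.ext_iff.mp (AddMonoidHom.mem_ker.mp hq)
          exact this
        have : (x : A (j + 1)) ∈ (g (j + 1)).range := by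
          rw [hexact (j + 1)]
          exact hx0
        obtain ⟨b, hb⟩ := this
        refine ⟨QuotientAddGroup.mk b, ?_⟩
        show QuotientAddGroup.mk (α₀ b) = QuotientAddGroup.mk x
        congr 1
        exact Subtype.ext hb
  · intro x
    rfl
  · intro b x hx
    show QuotientAddGroup.mk (α₀ b) = QuotientAddGroup.mk x
    congr 1
    exact Subtype.ext hx.symm

end
end

section
/- The sequence 0 → M → M_* → M_* → 0 given by ι and α_γ is exact: ι is injective, the kernel of α_γ equals the range of ι, and α_γ is surjective. -/
section Helpers

variable {X M : Type*} [TopologicalSpace X]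

theorem lc_eq_isOpen {f g : X → M} (hf : IsLocallyConstant f) (hg : IsLocallyConstant g) :
    IsOpen {x | f x = g x} := by
  rw [isOpen_iff_forall_mem_open]
  intro x hx
  refine ⟨f ⁻¹' {f x} ∩ g ⁻¹' {g x}, ?_, (hf _).inter (hg _), rfl, rfl⟩
  rintro y ⟨hy1, hy2⟩
  simp only [Set.mem_preimage, Set.mem_singleton_iff] at hy1 hy2
  simp only [Set.mem_setOf_eq, hy1, hy2]
  exact hx

theorem lc_eq_isClosed {f g : X → M} (hf : IsLocallyConstant f) (hg : IsLocallyConstant g) :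
    IsClosed {x | f x = g x} := by
  rw [← isOpen_compl_iff, isOpen_iff_forall_mem_open]
  intro x hx
  refine ⟨f ⁻¹' {f x} ∩ g ⁻¹' {g x}, ?_, (hf _).inter (hg _), rfl, rfl⟩
  rintro y ⟨hy1, hy2⟩
  simp only [Set.mem_preimage, Set.mem_singleton_iff] at hy1 hy2
  simp only [Set.mem_compl_iff, Set.mem_setOf_eq, hy1, hy2]
  exact hx

theorem lc_ext_dense {f g : X → M} (hf : IsLocallyConstant f) (hg : IsLocallyConstant g)
    {s : Set X} (hs : Dense s) (h : ∀ x ∈ s, f x = g x) : ∀ x, f x = g x := by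
  intro x
  have h1 : s ⊆ {x | f x = g x} := h
  have h2 := (lc_eq_isClosed hf hg).closure_subset_iff.2 h1
  exact h2 (by rw [hs.closure_eq]; trivial)

end Helpers

/-- **The exact sequence (43) of Section 5.2.** Let `Γ` be a profinite group with a
topological generator `γ` such that `Γ` has an open subgroup of every finite index
(so `Γ ≅ Ẑ`), and let `M` be a discrete `Γ`-module of finite exponent.  Let `M_*` be the
co-induced module of locally constant functions `Γ → M`, let `ι : M → M_*` be
`ι m σ = σ • m`, and let `α_γ : M_* → M_*` be `(α_γ f) σ = f (σ γ) - γ • f σ`.  Then the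
sequence `0 → M → M_* → M_* → 0` given by `ι` and `α_γ` is exact: `ι` is injective, the
kernel of `α_γ` equals the range of `ι`, and `α_γ` is surjective. -/
theorem coinduced_sequence_exact
    (Γ : Type*) [Group Γ] [TopologicalSpace Γ] [IsTopologicalGroup Γ]
    [CompactSpace Γ] [T2Space Γ] [TotallyDisconnectedSpace Γ]
    (γ : Γ) (hγ : Dense ((Subgroup.zpowers γ : Subgroup Γ) : Set Γ))
    (hindex : ∀ n : ℕ, 1 ≤ n → ∃ H : Subgroup Γ, IsOpen (H : Set Γ) ∧ H.index = n)
    (M : Type*) [AddCommGroup M] [DistribMulAction Γ M]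
    (N : ℕ) (hN : 1 ≤ N) (hexp : ∀ m : M, N • m = 0)
    (hstab : ∀ m : M, IsOpen {σ : Γ | σ • m = m})
    (ι : M → LocallyConstant Γ M) (hι : ∀ (m : M) (σ : Γ), ι m σ = σ • m)
    (αγ : LocallyConstant Γ M → LocallyConstant Γ M)
    (hαγ : ∀ (f : LocallyConstant Γ M) (σ : Γ), αγ f σ = f (σ * γ) - γ • f σ) :
    Function.Injective ι ∧ (∀ f, αγ f = 0 ↔ ∃ m, ι m = f) ∧ Function.Surjective αγ := by
  classical
  -- Γ is commutative since it has a dense cyclic subgroup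
  have hγc : ∀ b : Γ, γ * b = b * γ := by
    intro b
    have hc : IsClosed {b : Γ | γ * b = b * γ} :=
      isClosed_eq (continuous_const.mul continuous_id) (continuous_id.mul continuous_const)
    have hsub : (Subgroup.zpowers γ : Set Γ) ⊆ {b : Γ | γ * b = b * γ} := by
      rintro x hx
      obtain ⟨i, rfl⟩ := Subgroup.mem_zpowers_iff.1 hx
      exact ((Commute.refl γ).zpow_right i).eq
    have h2 := hc.closure_subset_iff.2 hsub
    exact h2 (by rw [hγ.closure_eq]; trivial)
  have hcomm : ∀ a b : Γ, a * b = b * a := by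
    intro a b
    have hc : IsClosed {a : Γ | a * b = b * a} :=
      isClosed_eq (continuous_id.mul continuous_const) (continuous_const.mul continuous_id)
    have hsub : (Subgroup.zpowers γ : Set Γ) ⊆ {a : Γ | a * b = b * a} := by
      rintro x hx
      obtain ⟨i, rfl⟩ := Subgroup.mem_zpowers_iff.1 hx
      exact (Commute.zpow_left (hγc b) i).eq
    have h2 := hc.closure_subset_iff.2 hsub
    exact h2 (by rw [hγ.closure_eq]; trivial)
  refine ⟨?_, ?_, ?_⟩
  · -- injectivity
    intro m m' h
    have h1 := DFunLike.congr_fun h (1 : Γ)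
    rwa [hι, hι, one_smul, one_smul] at h1
  · -- kernel = image
    intro f
    constructor
    · intro h0
      have hrel : ∀ σ : Γ, f (σ * γ) = γ • f σ := by
        intro σ
        have h1 := DFunLike.congr_fun h0 σ
        rw [hαγ] at h1
        have h2 : f (σ * γ) - γ • f σ = 0 := by simpa using h1
        exact sub_eq_zero.1 h2
      refine ⟨f 1, ?_⟩
      have hzp : ∀ i : ℤ, f (γ ^ i) = γ ^ i • f 1 := by
        intro i
        induction i using Int.induction_on with
        | zero => simp
        | succ i ih =>
          rw [zpow_add_one, hrel, ih, smul_smul]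
          congr 1
          exact hγc (γ ^ (i : ℤ))
        | pred i ih =>
          have h1 : γ ^ (-(i : ℤ) - 1) * γ = γ ^ (-(i : ℤ)) := by
            rw [← zpow_add_one]
            congr 1
            ring
          have h2 := hrel (γ ^ (-(i : ℤ) - 1))
          rw [h1, ih] at h2
          have h3 : f (γ ^ (-(i : ℤ) - 1)) = γ⁻¹ • (γ ^ (-(i : ℤ)) • f 1) := by
            rw [h2, inv_smul_smul]
          rw [h3, smul_smul]
          congr 1
          rw [show -(i : ℤ) - 1 = -1 + -(i : ℤ) by ring, zpow_add, zpow_neg_one]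
      apply DFunLike.ext
      apply lc_ext_dense (ι (f 1)).isLocallyConstant f.isLocallyConstant hγ
      intro x hx
      obtain ⟨i, rfl⟩ := Subgroup.mem_zpowers_iff.1 hx
      show (ι (f 1)) (γ ^ i) = f (γ ^ i)
      rw [hι, hzp]
    · rintro ⟨m, rfl⟩
      apply DFunLike.ext
      intro σ
      rw [hαγ, hι, hι]
      have h1 : γ • σ • m = (σ * γ) • m := by rw [smul_smul, hcomm γ σ]
      rw [h1, sub_self]
      simp
  · -- surjectivity
    intro g
    have hrange : (Set.range g).Finite := g.range_finite
    -- the subgroup of elements fixing g by right translation and fixing all values of g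
    let H1 : Subgroup Γ :=
      { carrier := {h | ∀ σ : Γ, g (σ * h) = g σ}
        one_mem' := by intro σ; rw [mul_one]
        mul_mem' := by
          intro a b ha hb σ
          rw [← mul_assoc, hb, ha]
        inv_mem' := by
          intro a ha σ
          have h1 := ha (σ * a⁻¹)
          rw [inv_mul_cancel_right] at h1
          exact h1.symm }
    let H2 : Subgroup Γ :=
      { carrier := {h | ∀ σ : Γ, h • g σ = g σ}
        one_mem' := by intro σ; rw [one_smul]
        mul_mem' := by
          intro a b ha hb σ
          rw [mul_smul, hb, ha]
        inv_mem' := by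
          intro a ha σ
          rw [← ha σ, inv_smul_smul, ha σ] }
    have hmem1 : ∀ h : Γ, h ∈ H1 ↔ ∀ σ : Γ, g (σ * h) = g σ := fun h => Iff.rfl
    have hmem2 : ∀ h : Γ, h ∈ H2 ↔ ∀ σ : Γ, h • g σ = g σ := fun h => Iff.rfl
    -- H1 ⊓ H2 is open
    have hSopen : IsOpen {p : Γ × Γ | g (p.1 * p.2) = g p.1} := by
      have h1 : IsLocallyConstant (fun p : Γ × Γ => g (p.1 * p.2)) :=
        g.isLocallyConstant.comp_continuous (continuous_fst.mul continuous_snd)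
      have h2 : IsLocallyConstant (fun p : Γ × Γ => g p.1) :=
        g.isLocallyConstant.comp_continuous continuous_fst
      exact lc_eq_isOpen h1 h2
    obtain ⟨u, v, hu, hv, huu, hvv, huv⟩ :=
      generalized_tube_lemma isCompact_univ (isCompact_singleton : IsCompact ({1} : Set Γ))
        hSopen (by
          rintro ⟨σ, t⟩ hp
          rw [Set.mem_prod] at hp
          obtain ⟨-, ht⟩ := hp
          rw [Set.mem_singleton_iff] at ht
          subst ht
          show g (σ * 1) = g σ
          rw [mul_one])
    have hv1 : (1 : Γ) ∈ v := hvv rfl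
    have hV2 : IsOpen (⋂ m ∈ Set.range g, {σ : Γ | σ • m = m}) :=
      hrange.isOpen_biInter (fun m _ => hstab m)
    have hHopen : IsOpen ((H1 ⊓ H2 : Subgroup Γ) : Set Γ) := by
      apply Subgroup.isOpen_of_mem_nhds (g := (1 : Γ))
      apply Filter.mem_of_superset ((hv.inter hV2).mem_nhds ⟨hv1, by
        simp only [Set.mem_iInter]
        intro m _
        exact one_smul _ _⟩)
      rintro h ⟨hh1, hh2⟩
      rw [SetLike.mem_coe, Subgroup.mem_inf]
      constructor
      · intro σ
        exact huv (Set.mem_prod.2 ⟨huu (Set.mem_univ σ), hh1⟩ :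
          ((σ, h) : Γ × Γ) ∈ u ×ˢ v)
      · intro σ
        exact Set.mem_iInter₂.1 hh2 (g σ) ⟨σ, rfl⟩
    have hnormal : ∀ K : Subgroup Γ, K.Normal := by
      intro K
      constructor
      intro x hx gg
      rw [hcomm gg x, mul_inv_cancel_right]
      exact hx
    haveI : (H1 ⊓ H2 : Subgroup Γ).Normal := hnormal _
    haveI hQfin : Finite (Γ ⧸ (H1 ⊓ H2 : Subgroup Γ)) :=
      Subgroup.quotient_finite_of_isOpen _ hHopen
    set n := (H1 ⊓ H2 : Subgroup Γ).index with hn_def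
    have hn0 : n ≠ 0 := by
      have h1 : 0 < Nat.card (Γ ⧸ (H1 ⊓ H2 : Subgroup Γ)) := Nat.card_pos
      rw [hn_def, Subgroup.index_eq_card]
      omega
    have hγn : γ ^ n ∈ (H1 ⊓ H2 : Subgroup Γ) := by
      rw [← QuotientGroup.eq_one_iff, QuotientGroup.mk_pow, hn_def, Subgroup.index_eq_card]
      exact pow_card_eq_one'
    -- an open subgroup of index k = n * N
    obtain ⟨H', hH'open, hH'index⟩ := hindex (n * N)
      (Nat.one_le_iff_ne_zero.2 (Nat.mul_ne_zero hn0 (by omega)))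
    haveI : H'.Normal := hnormal _
    haveI hQ'fin : Finite (Γ ⧸ H') := Subgroup.quotient_finite_of_isOpen _ hH'open
    set k := n * N with hk_def
    have hk0 : 0 < k := Nat.pos_of_ne_zero (Nat.mul_ne_zero hn0 (by omega))
    -- every element of Γ ⧸ H' is a power of the image of γ
    have hgen : ∀ σ : Γ, ∃ i : ℤ,
        (QuotientGroup.mk (γ ^ i) : Γ ⧸ H') = QuotientGroup.mk σ := by
      intro σ
      have hopen : IsOpen ((fun x => σ * x) '' (H' : Set Γ)) :=
        (Homeomorph.mulLeft σ).isOpen_image.2 hH'open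
      have hne : ((fun x => σ * x) '' (H' : Set Γ)).Nonempty :=
        ⟨σ * 1, ⟨1, H'.one_mem, rfl⟩⟩
      obtain ⟨x, hx1, hx2⟩ := hγ.inter_open_nonempty _ hopen hne
      obtain ⟨i, rfl⟩ := Subgroup.mem_zpowers_iff.1 hx2
      obtain ⟨h, hh, hxh⟩ := hx1
      refine ⟨i, ?_⟩
      rw [QuotientGroup.eq]
      have h1 : (γ ^ i)⁻¹ * σ = h⁻¹ := by
        have hxh' : σ * h = γ ^ i := hxh
        rw [← hxh', mul_inv_rev, mul_assoc, inv_mul_cancel, mul_one]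
      rw [h1]
      exact H'.inv_mem hh
    have horder : orderOf (QuotientGroup.mk γ : Γ ⧸ H') = k := by
      have htop : Subgroup.zpowers (QuotientGroup.mk γ : Γ ⧸ H') = ⊤ := by
        rw [Subgroup.eq_top_iff']
        intro q
        obtain ⟨σ, rfl⟩ := QuotientGroup.mk_surjective q
        obtain ⟨i, hi⟩ := hgen σ
        exact Subgroup.mem_zpowers_iff.2 ⟨i, by rw [← QuotientGroup.mk_zpow]; exact hi⟩
      rw [← Nat.card_zpowers, htop, Subgroup.card_top, ← Subgroup.index_eq_card, hH'index]
    -- powers of γ that die in Γ ⧸ H' belong to H1 ⊓ H2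
    have hdvd : ∀ i : ℤ, (QuotientGroup.mk γ : Γ ⧸ H') ^ i = 1 →
        γ ^ i ∈ (H1 ⊓ H2 : Subgroup Γ) := by
      intro i hi
      have h1 : ((k : ℕ) : ℤ) ∣ i := by
        rw [← horder]
        exact orderOf_dvd_iff_zpow_eq_one.2 hi
      have hnk : (n : ℕ) ∣ k := ⟨N, rfl⟩
      have h2 : ((n : ℕ) : ℤ) ∣ i := dvd_trans (Int.natCast_dvd_natCast.2 hnk) h1
      obtain ⟨m, rfl⟩ := h2
      have h3 : γ ^ ((n : ℤ) * m) = (γ ^ n) ^ m := by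
        rw [zpow_mul, zpow_natCast]
      rw [h3]
      exact Subgroup.zpow_mem _ hγn m
    have hgEq : ∀ i j : ℤ,
        (QuotientGroup.mk (γ ^ i) : Γ ⧸ H') = QuotientGroup.mk (γ ^ j) →
        g (γ ^ i) = g (γ ^ j) := by
      intro i j hij
      rw [QuotientGroup.mk_zpow, QuotientGroup.mk_zpow] at hij
      have h1 : (QuotientGroup.mk γ : Γ ⧸ H') ^ (i - j) = 1 := by
        rw [zpow_sub, hij, mul_inv_cancel]
      have h2 := hdvd _ h1
      have h3 : γ ^ i = γ ^ j * γ ^ (i - j) := by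
        rw [← zpow_add]
        congr 1
        ring
      rw [h3]
      exact ((Subgroup.mem_inf.1 h2).1 : ∀ σ : Γ, g (σ * γ ^ (i - j)) = g σ) (γ ^ j)
    -- the partial sums
    set Φ : ℕ → M := fun i => ∑ j ∈ Finset.range i, γ ^ (i - 1 - j) • g (γ ^ j) with hΦ
    have hA : ∀ i : ℕ, Φ (i + 1) = γ • Φ i + g (γ ^ i) := by
      intro i
      rw [hΦ]
      simp only
      rw [Finset.sum_range_succ]
      congr 1
      · rw [Finset.smul_sum]
        apply Finset.sum_congr rfl
        intro j hj
        rw [Finset.mem_range] at hj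
        rw [smul_smul, ← pow_succ']
        congr 2
        omega
      · rw [show i + 1 - 1 - i = 0 from by omega, pow_zero, one_smul]
    have hstep : ∀ s : ℕ, Φ (s * n + n) = Φ (s * n) + Φ n := by
      intro s
      have hsplit : Φ (s * n + n) =
          (∑ j ∈ Finset.range (s * n), γ ^ (s * n + n - 1 - j) • g (γ ^ j)) +
          ∑ j ∈ Finset.Ico (s * n) (s * n + n), γ ^ (s * n + n - 1 - j) • g (γ ^ j) := by
        rw [hΦ]
        simp only
        rw [Finset.sum_range_add_sum_Ico _ (Nat.le_add_right (s * n) n)]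
      rw [hsplit]
      congr 1
      · rw [hΦ]
        apply Finset.sum_congr rfl
        intro j hj
        rw [Finset.mem_range] at hj
        rw [show s * n + n - 1 - j = (s * n - 1 - j) + n from by omega, pow_add, mul_smul,
          ((Subgroup.mem_inf.1 hγn).2 : ∀ σ : Γ, γ ^ n • g σ = g σ) (γ ^ j)]
      · rw [Finset.sum_Ico_eq_sum_range]
        rw [show s * n + n - s * n = n from by omega]
        rw [hΦ]
        apply Finset.sum_congr rfl
        intro r hr
        rw [Finset.mem_range] at hr
        have h1 : γ ^ (s * n + r) = γ ^ r * γ ^ (s * n) := by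
          rw [pow_add, hcomm]
        have h2 : γ ^ (s * n) ∈ (H1 ⊓ H2 : Subgroup Γ) := by
          rw [show s * n = n * s from Nat.mul_comm s n, pow_mul]
          exact Subgroup.pow_mem _ hγn s
        rw [h1, ((Subgroup.mem_inf.1 h2).1 : ∀ σ : Γ, g (σ * γ ^ (s * n)) = g σ) (γ ^ r)]
        congr 2
        omega
    have hΦmul : ∀ s : ℕ, Φ (s * n) = s • Φ n := by
      intro s
      induction s with
      | zero => simp [hΦ]
      | succ s ih =>
        rw [show (s + 1) * n = s * n + n from by ring, hstep, ih, succ_nsmul]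
    have hB : Φ k = 0 := by
      rw [hk_def, show n * N = N * n from Nat.mul_comm n N, hΦmul, hexp]
    -- the representative exponent function
    have hQex : ∀ q : Γ ⧸ H', ∃ r : ℕ, r < k ∧ (QuotientGroup.mk γ : Γ ⧸ H') ^ r = q := by
      intro q
      obtain ⟨σ, rfl⟩ := QuotientGroup.mk_surjective q
      obtain ⟨i, hi⟩ := hgen σ
      have h1 : 0 ≤ i % (k : ℤ) := Int.emod_nonneg i (by exact_mod_cast hk0.ne')
      have h2 : i % (k : ℤ) < k := Int.emod_lt_of_pos i (by exact_mod_cast hk0)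
      refine ⟨(i % (k : ℤ)).toNat, by omega, ?_⟩
      have h3 : ((QuotientGroup.mk γ : Γ ⧸ H')) ^ (((i % (k : ℤ)).toNat : ℤ)) =
          (QuotientGroup.mk γ : Γ ⧸ H') ^ i := by
        rw [Int.toNat_of_nonneg h1, ← horder]
        exact zpow_mod_orderOf _ _
      rw [← zpow_natCast, h3, ← QuotientGroup.mk_zpow]
      exact hi
    choose R hRlt hRspec using hQex
    set f0 : Γ → M := fun σ => Φ (R (QuotientGroup.mk σ)) with hf0
    have hlc : IsLocallyConstant f0 := by
      intro s
      rw [isOpen_iff_forall_mem_open]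
      intro x hx
      refine ⟨(fun y => x * y) '' (H' : Set Γ), ?_,
        (Homeomorph.mulLeft x).isOpen_image.2 hH'open, ⟨1, H'.one_mem, mul_one x⟩⟩
      rintro y ⟨h, hh, rfl⟩
      have h1 : (QuotientGroup.mk (x * h) : Γ ⧸ H') = QuotientGroup.mk x := by
        rw [QuotientGroup.eq]
        have h2 : (x * h)⁻¹ * x = h⁻¹ := by
          rw [mul_inv_rev, mul_assoc, inv_mul_cancel, mul_one]
        rw [h2]
        exact H'.inv_mem hh
      show f0 (x * h) ∈ s
      rw [hf0]
      simp only
      rw [h1]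
      exact hx
    refine ⟨⟨f0, hlc⟩, ?_⟩
    apply DFunLike.ext
    apply lc_ext_dense (αγ ⟨f0, hlc⟩).isLocallyConstant g.isLocallyConstant hγ
    intro x hx
    obtain ⟨i, rfl⟩ := Subgroup.mem_zpowers_iff.1 hx
    show (αγ ⟨f0, hlc⟩) (γ ^ i) = g (γ ^ i)
    rw [hαγ]
    have hFcoe : ∀ z : Γ, (⟨f0, hlc⟩ : LocallyConstant Γ M) z = Φ (R (QuotientGroup.mk z)) :=
      fun z => rfl
    set r := R (QuotientGroup.mk (γ ^ i)) with hr_def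
    have hrlt : r < k := hRlt _
    have hrspec : (QuotientGroup.mk γ : Γ ⧸ H') ^ r = QuotientGroup.mk (γ ^ i) := hRspec _
    have hg_ir : g (γ ^ i) = g (γ ^ r) := by
      have h2 : (QuotientGroup.mk (γ ^ ((r : ℕ) : ℤ)) : Γ ⧸ H') = QuotientGroup.mk (γ ^ i) := by
        rw [zpow_natCast, QuotientGroup.mk_pow, hrspec]
      have h1 := hgEq i ((r : ℕ) : ℤ) h2.symm
      rwa [zpow_natCast] at h1
    have hq' : (QuotientGroup.mk (γ ^ i * γ) : Γ ⧸ H') = (QuotientGroup.mk γ : Γ ⧸ H') ^ (r + 1) := by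
      rw [QuotientGroup.mk_mul, ← hrspec, pow_succ]
    by_cases hcase : r + 1 < k
    · have hreq : R (QuotientGroup.mk (γ ^ i * γ)) = r + 1 := by
        apply pow_injOn_Iio_orderOf (x := (QuotientGroup.mk γ : Γ ⧸ H'))
        · rw [horder]; exact Set.mem_Iio.2 (hRlt _)
        · rw [horder]; exact Set.mem_Iio.2 hcase
        · show (QuotientGroup.mk γ : Γ ⧸ H') ^ _ = (QuotientGroup.mk γ : Γ ⧸ H') ^ _
          rw [hRspec, hq']
      rw [hFcoe, hFcoe, hreq, ← hr_def, hA r, add_sub_cancel_left, hg_ir]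
    · have hrk : r + 1 = k := by omega
      have hreq : R (QuotientGroup.mk (γ ^ i * γ)) = 0 := by
        apply pow_injOn_Iio_orderOf (x := (QuotientGroup.mk γ : Γ ⧸ H'))
        · rw [horder]; exact Set.mem_Iio.2 (hRlt _)
        · rw [horder]; exact Set.mem_Iio.2 hk0
        · show (QuotientGroup.mk γ : Γ ⧸ H') ^ _ = (QuotientGroup.mk γ : Γ ⧸ H') ^ _
          rw [hRspec, hq', hrk, pow_zero, ← horder, pow_orderOf_eq_one]
      have hΦ0 : Φ 0 = 0 := by simp [hΦ]
      have h5 : γ • Φ r + g (γ ^ r) = 0 := by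
        rw [← hA r, hrk, hB]
      rw [hFcoe, hFcoe, hreq, ← hr_def, hΦ0, zero_sub, hg_ir]
      exact neg_eq_of_add_eq_zero_right h5
end

section
/- Let T : ℤ × ℤ → ℤ be a function with finite support and let r ∈ ℤ. Then ∑_{j ∈ ℤ} ∑_{i ≤ r} (−1)^{i+j} (r − i) · (T(i,j) − 2·T(i−1, j+1) + T(i−2, j+2)) = ∑_{j ∈ ℤ} (−1)^{j−1} T(r−1, j−r). (All sums have only finitely many nonzero terms.) -/
open Function Finset

/-- Shift invariance of a sum over a big interval, when the summand vanishes
outside suitable ranges. -/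
private lemma sum_shift_aux (G : ℤ → ℤ) (A B k : ℤ)
    (hG : ∀ j, G j ≠ 0 → (A ≤ j - k ∧ j - k ≤ B ∧ A ≤ j ∧ j ≤ B)) :
    ∑ j ∈ Finset.Icc A B, G (j + k) = ∑ j ∈ Finset.Icc A B, G j := by
  have h1 : ∑ j ∈ Finset.Icc A B, G (j + k)
      = ∑ j ∈ Finset.Icc (A + k) (B + k), G j := by
    rw [← Finset.map_add_right_Icc, Finset.sum_map]
    rfl
  rw [h1]
  set C := min A (A + k)
  set D := max B (B + k)
  have h2 : ∑ j ∈ Finset.Icc (A + k) (B + k), G j = ∑ j ∈ Finset.Icc C D, G j := by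
    apply Finset.sum_subset
    · intro x hx
      simp only [Finset.mem_Icc] at *
      omega
    · intro x hx hx'
      by_contra hne
      have := hG x hne
      simp only [Finset.mem_Icc] at hx hx'
      omega
  have h3 : ∑ j ∈ Finset.Icc A B, G j = ∑ j ∈ Finset.Icc C D, G j := by
    apply Finset.sum_subset
    · intro x hx
      simp only [Finset.mem_Icc] at *
      omega
    · intro x hx hx'
      by_contra hne
      have := hG x hne
      simp only [Finset.mem_Icc] at hx hx'
      omega
  rw [h2, h3]

/-- Telescoping sum over `Icc a m`. -/
private lemma tele_aux (g : ℤ → ℤ) (a : ℤ) :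
    ∀ m : ℤ, a ≤ m → ∑ i ∈ Finset.Icc a m, (g i - g (i - 1)) = g m - g (a - 1) := by
  refine Int.le_induction ?_ ?_
  · simp
  · intro n hn ih
    have hins : Finset.Icc a (n + 1) = insert (n + 1) (Finset.Icc a n) := by
      ext x
      simp only [Finset.mem_Icc, Finset.mem_insert]
      omega
    have hnot : (n + 1) ∉ Finset.Icc a n := by
      simp only [Finset.mem_Icc]
      omega
    rw [hins, Finset.sum_insert hnot, ih]
    have : n + 1 - 1 = n := by ring
    rw [this]
    ring

/-- The one-variable weighted telescoping identity. -/
private lemma weighted_aux (u : ℤ → ℤ) (a : ℤ) (h0 : u (a - 1) = 0) (h1 : u (a - 2) = 0) :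
    ∀ r : ℤ, a ≤ r →
      ∑ i ∈ Finset.Icc a r, (r - i) * (u i - 2 * u (i - 1) + u (i - 2)) = u (r - 1) := by
  have tele2 : ∀ m : ℤ, a ≤ m →
      ∑ i ∈ Finset.Icc a m, (u i - 2 * u (i - 1) + u (i - 2)) = u m - u (m - 1) := by
    intro m hm
    have := tele_aux (fun i => u i - u (i - 1)) a m hm
    have hcongr : ∑ i ∈ Finset.Icc a m, (u i - 2 * u (i - 1) + u (i - 2))
        = ∑ i ∈ Finset.Icc a m, ((u i - u (i - 1)) - (u (i - 1) - u (i - 1 - 1))) := by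
      apply Finset.sum_congr rfl
      intro i _
      have : i - 1 - 1 = i - 2 := by ring
      rw [this]; ring
    rw [hcongr, this]
    have e1 : a - 1 - 1 = a - 2 := by ring
    rw [e1, h0, h1]
    ring
  refine Int.le_induction ?_ ?_
  · have hIcc : Finset.Icc a a = {a} := Finset.Icc_self a
    rw [hIcc, Finset.sum_singleton, h0]
    ring
  · intro n hn ih
    have hins : Finset.Icc a (n + 1) = insert (n + 1) (Finset.Icc a n) := by
      ext x
      simp only [Finset.mem_Icc, Finset.mem_insert]
      omega
    have hnot : (n + 1) ∉ Finset.Icc a n := by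
      simp only [Finset.mem_Icc]
      omega
    rw [hins, Finset.sum_insert hnot]
    have hsplit : ∑ i ∈ Finset.Icc a n, (n + 1 - i) * (u i - 2 * u (i - 1) + u (i - 2))
        = (∑ i ∈ Finset.Icc a n, (n - i) * (u i - 2 * u (i - 1) + u (i - 2)))
          + ∑ i ∈ Finset.Icc a n, (u i - 2 * u (i - 1) + u (i - 2)) := by
      rw [← Finset.sum_add_distrib]
      apply Finset.sum_congr rfl
      intro i _
      ring
    rw [hsplit, ih, tele2 n hn]
    have : n + 1 - 1 = n := by ring
    rw [this]
    ring

/-- **The combinatorial identity (39) from Aside 2.8.** Let `T : ℤ × ℤ → ℤ` have finite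
support and let `r : ℤ`.  Then
`∑_j ∑_{i ≤ r} (-1)^{i+j} (r - i) (T(i,j) - 2 T(i-1,j+1) + T(i-2,j+2))
  = ∑_j (-1)^{j-1} T(r-1, j-r)`. -/
theorem weighted_sum_second_difference_eq
    (T : ℤ × ℤ → ℤ) (hT : (Function.support T).Finite) (r : ℤ) :
    ∑ᶠ (j : ℤ), ∑ᶠ (i : ℤ) (_ : i ≤ r),
        ((i + j).negOnePow : ℤ) * (r - i) *
          (T (i, j) - 2 * T (i - 1, j + 1) + T (i - 2, j + 2)) =
      ∑ᶠ (j : ℤ), ((j - 1).negOnePow : ℤ) * T (r - 1, j - r) := by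
  classical
  set s : Finset (ℤ × ℤ) := hT.toFinset with hs
  set N : ℕ := s.sup (fun p => max p.1.natAbs p.2.natAbs) with hN
  set K : ℤ := (N : ℤ) + (r.natAbs : ℤ) + 5 with hK
  have hTz : ∀ i j : ℤ, (i < -K ∨ K < i ∨ j < -K ∨ K < j) → T (i, j) = 0 := by
    intro i j h
    by_contra hne
    have hmem : (i, j) ∈ s := by
      rw [hs, Set.Finite.mem_toFinset]
      exact hne
    have hle := Finset.le_sup (f := fun p : ℤ × ℤ => max p.1.natAbs p.2.natAbs) hmem
    simp only [le_max_iff, max_le_iff] at hle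
    omega
  have hrK : -K + 5 ≤ r ∧ r ≤ K - 5 := by omega
  -- the summand
  set W : ℤ → ℤ → ℤ := fun i j => ((i + j).negOnePow : ℤ) * (r - i) *
      (T (i, j) - 2 * T (i - 1, j + 1) + T (i - 2, j + 2)) with hW
  set J : Finset ℤ := Finset.Icc (-(2 * K + 2)) (2 * K + 2) with hJ
  set I : Finset ℤ := Finset.Icc (-K) r with hI
  -- Step A1: inner finsum to Finset sum
  have stepA1 : ∀ j : ℤ, (∑ᶠ (i : ℤ) (_ : i ≤ r), W i j) = ∑ i ∈ I, W i j := by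
    intro j
    have h1 : (∑ᶠ (i : ℤ) (_ : i ≤ r), W i j)
        = ∑ᶠ (i : ℤ), if i ≤ r then W i j else 0 := by
      apply finsum_congr
      intro i
      exact finsum_eq_if
    rw [h1]
    have h2 : (∑ᶠ (i : ℤ), if i ≤ r then W i j else 0)
        = ∑ i ∈ I, (if i ≤ r then W i j else 0) := by
      apply finsum_eq_sum_of_support_subset
      intro i hi
      simp only [Function.mem_support, ne_eq] at hi
      simp only [hI, Finset.coe_Icc, Set.mem_Icc]
      constructor
      · by_contra hlt
        push_neg at hlt
        apply hi
        by_cases hir : i ≤ r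
        · rw [if_pos hir, hW]
          have t1 : T (i, j) = 0 := hTz i j (by omega)
          have t2 : T (i - 1, j + 1) = 0 := hTz (i - 1) (j + 1) (by omega)
          have t3 : T (i - 2, j + 2) = 0 := hTz (i - 2) (j + 2) (by omega)
          simp only [t1, t2, t3]
          ring
        · rw [if_neg hir]
      · by_contra hlt
        push_neg at hlt
        apply hi
        rw [if_neg (by omega)]
    rw [h2]
    apply Finset.sum_congr rfl
    intro i hi
    rw [if_pos]
    simp only [hI, Finset.mem_Icc] at hi
    omega
  -- Step A2: outer finsum to Finset sum
  have stepA2 : (∑ᶠ (j : ℤ), ∑ i ∈ I, W i j) = ∑ j ∈ J, ∑ i ∈ I, W i j := by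
    apply finsum_eq_sum_of_support_subset
    intro j hj
    simp only [Function.mem_support, ne_eq] at hj
    simp only [hJ, Finset.coe_Icc, Set.mem_Icc]
    by_contra hlt
    push_neg at hlt
    apply hj
    apply Finset.sum_eq_zero
    intro i _
    rw [hW]
    have hjb : j < -(2 * K + 2) ∨ 2 * K + 2 < j := by
      by_cases h : -(2 * K + 2) ≤ j
      · right; exact hlt h
      · left; omega
    have t1 : T (i, j) = 0 := hTz i j (by omega)
    have t2 : T (i - 1, j + 1) = 0 := hTz (i - 1) (j + 1) (by omega)
    have t3 : T (i - 2, j + 2) = 0 := hTz (i - 2) (j + 2) (by omega)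
    simp only [t1, t2, t3]
    ring
  -- define u
  set u : ℤ → ℤ := fun c => ∑ j ∈ J, ((c + j).negOnePow : ℤ) * T (c, j) with hu
  have hu0 : ∀ c : ℤ, (c < -K ∨ K < c) → u c = 0 := by
    intro c hc
    rw [hu]
    apply Finset.sum_eq_zero
    intro j _
    rw [hTz c j (by omega)]
    ring
  -- Step C: inner sum over j for fixed i
  have stepC : ∀ i : ℤ, ∑ j ∈ J, W i j
      = (r - i) * (u i - 2 * u (i - 1) + u (i - 2)) := by
    intro i
    have shift1 : ∑ j ∈ J, ((i + j).negOnePow : ℤ) * T (i - 1, j + 1)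
        = u (i - 1) := by
      have key := sum_shift_aux (fun j => ((i - 1 + j).negOnePow : ℤ) * T (i - 1, j))
        (-(2 * K + 2)) (2 * K + 2) 1 ?_
      · have e1 : ∑ j ∈ J, ((i + j).negOnePow : ℤ) * T (i - 1, j + 1)
            = ∑ j ∈ Finset.Icc (-(2 * K + 2)) (2 * K + 2),
                ((i - 1 + (j + 1)).negOnePow : ℤ) * T (i - 1, j + 1) := by
          rw [hJ]
          apply Finset.sum_congr rfl
          intro j _
          rw [show i - 1 + (j + 1) = i + j by ring]
        rw [e1]
        exact key
      · intro j hj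
        have hj' : ((i - 1 + j).negOnePow : ℤ) * T (i - 1, j) ≠ 0 := hj
        have hTj : T (i - 1, j) ≠ 0 := by
          intro h0
          apply hj'
          rw [h0]; ring
        have : ¬ (j < -K ∨ K < j) := fun h => hTj (hTz (i - 1) j (by omega))
        omega
    have shift2 : ∑ j ∈ J, ((i + j).negOnePow : ℤ) * T (i - 2, j + 2)
        = u (i - 2) := by
      have key := sum_shift_aux (fun j => ((i - 2 + j).negOnePow : ℤ) * T (i - 2, j))
        (-(2 * K + 2)) (2 * K + 2) 2 ?_
      · have e1 : ∑ j ∈ J, ((i + j).negOnePow : ℤ) * T (i - 2, j + 2)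
            = ∑ j ∈ Finset.Icc (-(2 * K + 2)) (2 * K + 2),
                ((i - 2 + (j + 2)).negOnePow : ℤ) * T (i - 2, j + 2) := by
          rw [hJ]
          apply Finset.sum_congr rfl
          intro j _
          rw [show i - 2 + (j + 2) = i + j by ring]
        rw [e1]
        exact key
      · intro j hj
        have hj' : ((i - 2 + j).negOnePow : ℤ) * T (i - 2, j) ≠ 0 := hj
        have hTj : T (i - 2, j) ≠ 0 := by
          intro h0
          apply hj'
          rw [h0]; ring
        have : ¬ (j < -K ∨ K < j) := fun h => hTj (hTz (i - 2) j (by omega))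
        omega
    have expand : ∑ j ∈ J, W i j
        = (r - i) * (∑ j ∈ J, ((i + j).negOnePow : ℤ) * T (i, j))
          - 2 * (r - i) * (∑ j ∈ J, ((i + j).negOnePow : ℤ) * T (i - 1, j + 1))
          + (r - i) * (∑ j ∈ J, ((i + j).negOnePow : ℤ) * T (i - 2, j + 2)) := by
      rw [Finset.mul_sum, Finset.mul_sum, Finset.mul_sum, ← Finset.sum_sub_distrib,
        ← Finset.sum_add_distrib]
      apply Finset.sum_congr rfl
      intro j _
      rw [hW]
      ring
    rw [expand, shift1, shift2]
    have : ∑ j ∈ J, ((i + j).negOnePow : ℤ) * T (i, j) = u i := by rw [hu]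
    rw [this]
    ring
  -- assemble LHS
  have hLHS : (∑ᶠ (j : ℤ), ∑ᶠ (i : ℤ) (_ : i ≤ r), W i j) = u (r - 1) := by
    have e1 : (∑ᶠ (j : ℤ), ∑ᶠ (i : ℤ) (_ : i ≤ r), W i j)
        = ∑ᶠ (j : ℤ), ∑ i ∈ I, W i j := finsum_congr stepA1
    rw [e1, stepA2, Finset.sum_comm]
    have e2 : ∑ i ∈ I, ∑ j ∈ J, W i j
        = ∑ i ∈ I, (r - i) * (u i - 2 * u (i - 1) + u (i - 2)) :=
      Finset.sum_congr rfl (fun i _ => stepC i)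
    rw [e2, hI]
    apply weighted_aux u (-K)
    · exact hu0 (-K - 1) (by omega)
    · exact hu0 (-K - 2) (by omega)
    · omega
  -- RHS
  have hRHS : (∑ᶠ (j : ℤ), ((j - 1).negOnePow : ℤ) * T (r - 1, j - r)) = u (r - 1) := by
    have e1 : (∑ᶠ (j : ℤ), ((j - 1).negOnePow : ℤ) * T (r - 1, j - r))
        = ∑ j ∈ J, ((j - 1).negOnePow : ℤ) * T (r - 1, j - r) := by
      apply finsum_eq_sum_of_support_subset
      intro j hj
      simp only [Function.mem_support, ne_eq] at hj
      simp only [hJ, Finset.coe_Icc, Set.mem_Icc]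
      have hTj : T (r - 1, j - r) ≠ 0 := by
        intro h0
        apply hj
        rw [h0]; ring
      have : ¬ (j - r < -K ∨ K < j - r) := fun h => hTj (hTz (r - 1) (j - r) (by omega))
      omega
    rw [e1]
    have key := sum_shift_aux (fun j => ((r - 1 + j).negOnePow : ℤ) * T (r - 1, j))
      (-(2 * K + 2)) (2 * K + 2) (-r) ?_
    · have e2 : ∑ j ∈ J, ((j - 1).negOnePow : ℤ) * T (r - 1, j - r)
          = ∑ j ∈ Finset.Icc (-(2 * K + 2)) (2 * K + 2),
              ((r - 1 + (j + -r)).negOnePow : ℤ) * T (r - 1, j + -r) := by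
        rw [hJ]
        apply Finset.sum_congr rfl
        intro j _
        rw [show r - 1 + (j + -r) = j - 1 by ring, show j + -r = j - r by ring]
      rw [e2]
      exact key
    · intro j hj
      have hj' : ((r - 1 + j).negOnePow : ℤ) * T (r - 1, j) ≠ 0 := hj
      have hTj : T (r - 1, j) ≠ 0 := by
        intro h0
        apply hj'
        rw [h0]; ring
      have : ¬ (j < -K ∨ K < j) := fun h => hTj (hTz (r - 1) j (by omega))
      omega
  rw [hLHS, hRHS]
end

section
/- The K-linear endomorphism L = F^a of V is semisimple (i.e., every L-invariant K-subspace of V has an L-invariant complement) if and only if every K-subspace W of V with F(W) ⊆ W admits a complementary K-subspace W′ (so V = W ⊕ W′) with F(W′) ⊆ W′. -/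
open Function

theorem aux_semilinear_semisimple {K V : Type*} [Field K] [AddCommGroup V] [Module K V]
    [FiniteDimensional K V]
    (σ : K →+* K) (hσs : Function.Surjective σ)
    (a : ℕ) (ha : 1 ≤ a) (haK : (a : K) ≠ 0)
    (F : V → V) (hFadd : ∀ x y, F (x + y) = F x + F y)
    (hFbij : Function.Bijective F)
    (hFsemi : ∀ (c : K) (v : V), F (c • v) = σ c • F v)
    (L : V →ₗ[K] V) (hL : ∀ v, L v = F^[a] v) :
    (∀ W : Submodule K V, (∀ v ∈ W, L v ∈ W) →
        ∃ W' : Submodule K V, (∀ v ∈ W', L v ∈ W') ∧ IsCompl W W') ↔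
      (∀ W : Submodule K V, (∀ v ∈ W, F v ∈ W) →
        ∃ W' : Submodule K V, (∀ v ∈ W', F v ∈ W') ∧ IsCompl W W') := by
  haveI : RingHomSurjective σ := ⟨hσs⟩
  set Fₗ : V →ₛₗ[σ] V := ⟨⟨F, fun x y => hFadd x y⟩, fun c v => hFsemi c v⟩ with hFₗ
  have hFₗ_apply : ∀ v, Fₗ v = F v := fun _ => rfl
  have hF0 : F 0 = 0 := map_zero Fₗ
  have hFinj : Function.Injective F := hFbij.injective
  have hFL : ∀ v, F (L v) = L (F v) := by
    intro v
    rw [hL, hL, ← Function.iterate_succ_apply' F a v, Function.iterate_succ_apply F a v]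
  have hiter_mem : ∀ (W : Submodule K V), (∀ v ∈ W, F v ∈ W) → ∀ n, ∀ v ∈ W, F^[n] v ∈ W := by
    intro W hW n
    induction n with
    | zero => intro v hv; simpa using hv
    | succ n ih =>
      intro v hv
      rw [Function.iterate_succ_apply]
      exact ih _ (hW v hv)
  set Fe : V ≃+ V := AddEquiv.ofBijective (AddMonoidHom.mk' F hFadd) hFbij with hFe
  have hFG : ∀ v, F (Fe.symm v) = v := fun v => Fe.apply_symm_apply v
  have hGF : ∀ v, Fe.symm (F v) = v := fun v => Fe.symm_apply_apply v
  set σe : K ≃+* K := RingEquiv.ofBijective σ ⟨σ.injective, hσs⟩ with hσe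
  have hσσe : ∀ c, σ (σe.symm c) = c := fun c => σe.apply_symm_apply c
  have hFiter_add : ∀ (i : ℕ) (x y : V), F^[i] (x + y) = F^[i] x + F^[i] y := by
    intro i
    induction i with
    | zero => intro x y; simp
    | succ i ih =>
      intro x y
      rw [Function.iterate_succ_apply' F, Function.iterate_succ_apply' F,
        Function.iterate_succ_apply' F, ih, hFadd]
  have hGiter_add : ∀ (i : ℕ) (x y : V), Fe.symm^[i] (x + y) = Fe.symm^[i] x + Fe.symm^[i] y := by
    intro i
    induction i with
    | zero => intro x y; simp
    | succ i ih =>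
      intro x y
      rw [Function.iterate_succ_apply' Fe.symm, Function.iterate_succ_apply' Fe.symm,
        Function.iterate_succ_apply' Fe.symm, ih, map_add]
  have hFiter_smul : ∀ (i : ℕ) (c : K) (v : V), F^[i] (c • v) = (⇑σ)^[i] c • F^[i] v := by
    intro i
    induction i with
    | zero => intro c v; simp
    | succ i ih =>
      intro c v
      rw [Function.iterate_succ_apply' F, Function.iterate_succ_apply' F,
        Function.iterate_succ_apply' (⇑σ), ih, hFsemi]
  have hG_smul : ∀ (c : K) (v : V), Fe.symm (c • v) = σe.symm c • Fe.symm v := by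
    intro c v
    apply hFinj
    rw [hFG, hFsemi, hσσe, hFG]
  have hGiter_smul : ∀ (i : ℕ) (c : K) (v : V),
      Fe.symm^[i] (c • v) = (⇑σe.symm)^[i] c • Fe.symm^[i] v := by
    intro i
    induction i with
    | zero => intro c v; simp
    | succ i ih =>
      intro c v
      rw [Function.iterate_succ_apply' Fe.symm, Function.iterate_succ_apply' Fe.symm,
        Function.iterate_succ_apply' (⇑σe.symm), ih, hG_smul]
  have hστ : ∀ (i : ℕ) (c : K), (⇑σ)^[i] ((⇑σe.symm)^[i] c) = c := by
    intro i
    induction i with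
    | zero => intro c; simp
    | succ i ih =>
      intro c
      rw [Function.iterate_succ_apply' (⇑σe.symm), Function.iterate_succ_apply (⇑σ), hσσe, ih]
  have hFGiter : ∀ (i : ℕ) (v : V), F^[i] (Fe.symm^[i] v) = v := by
    intro i
    induction i with
    | zero => intro v; simp
    | succ i ih =>
      intro v
      rw [Function.iterate_succ_apply' Fe.symm, Function.iterate_succ_apply F, hFG, ih]
  constructor
  · -- L-semisimple → F-statement
    intro hSS W hW
    have hWL : ∀ v ∈ W, L v ∈ W := fun v hv => by rw [hL]; exact hiter_mem W hW a v hv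
    obtain ⟨U, hU, hc⟩ := hSS W hWL
    set π : V →ₗ[K] V := W.subtype.comp (W.projectionOnto U hc) with hπ
    have hπW : ∀ v, π v ∈ W := fun v => (W.projectionOnto U hc v).2
    have hπ_left : ∀ w ∈ W, π w = w := by
      intro w hw
      have := Submodule.projectionOnto_apply_left hc ⟨w, hw⟩
      exact congrArg Subtype.val this
    have hπ_right : ∀ u ∈ U, π u = 0 := by
      intro u hu
      have := Submodule.projectionOnto_apply_right hc ⟨u, hu⟩
      exact congrArg Subtype.val this
    have hπL : ∀ v, π (L v) = L (π v) := by
      intro v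
      have hv : v ∈ W ⊔ U := by rw [hc.sup_eq_top]; trivial
      obtain ⟨w, hw, u, hu, rfl⟩ := Submodule.mem_sup.mp hv
      rw [map_add, map_add, map_add, hπ_left w hw, hπ_right u hu,
        hπ_left _ (hWL w hw), hπ_right _ (hU u hu), add_zero, add_zero]
    have hWG : ∀ w ∈ W, Fe.symm w ∈ W := by
      intro w hw
      have hLinj : Function.Injective L := by
        intro x y hxy
        exact (hFbij.iterate a).injective (by rw [← hL, ← hL, hxy])
      have hLr_inj : Function.Injective (L.restrict hWL) := by
        intro x y hxy
        ext
        exact hLinj (congrArg Subtype.val hxy)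
      obtain ⟨x, hx⟩ := LinearMap.injective_iff_surjective.mp hLr_inj ⟨w, hw⟩
      have hx' : L x.1 = w := congrArg Subtype.val hx
      obtain ⟨b, hb⟩ : ∃ b, a = b + 1 := ⟨a - 1, (Nat.succ_pred_eq_of_pos ha).symm⟩
      have hwF : w = F (F^[b] x.1) := by
        rw [← hx', hL, hb, Function.iterate_succ_apply' F b]
      rw [hwF, hGF]
      exact hiter_mem W hW b x.1 x.2
    have hWGiter : ∀ n, ∀ w ∈ W, Fe.symm^[n] w ∈ W := by
      intro n
      induction n with
      | zero => intro w hw; simpa using hw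
      | succ n ih =>
        intro w hw
        rw [Function.iterate_succ_apply' Fe.symm]
        exact hWG _ (ih w hw)
    set g : ℕ → V →ₗ[K] V := fun i =>
      { toFun := fun v => F^[i] (π (Fe.symm^[i] v))
        map_add' := by
          intro x y
          rw [hGiter_add, map_add, hFiter_add]
        map_smul' := by
          intro c v
          dsimp only [RingHom.id_apply]
          rw [hGiter_smul, map_smul, hFiter_smul, hστ] } with hg
    have hg_apply : ∀ i v, g i v = F^[i] (π (Fe.symm^[i] v)) := fun _ _ => rfl
    set Sg : V →ₗ[K] V := ∑ i ∈ Finset.range a, g i with hSg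
    set π' : V →ₗ[K] V := (a : K)⁻¹ • Sg with hπ'
    have hSg_apply : ∀ v, Sg v = ∑ i ∈ Finset.range a, g i v := by
      intro v
      rw [hSg, LinearMap.sum_apply]
    have hπ'_apply : ∀ v, π' v = (a : K)⁻¹ • ∑ i ∈ Finset.range a, g i v := by
      intro v
      rw [hπ', LinearMap.smul_apply, hSg_apply]
    have hπ'W : ∀ v, π' v ∈ W := by
      intro v
      rw [hπ'_apply]
      refine W.smul_mem _ (Submodule.sum_mem W fun i _ => ?_)
      rw [hg_apply]
      exact hiter_mem W hW i _ (hπW _)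
    have hπ'_id : ∀ w ∈ W, π' w = w := by
      intro w hw
      have hterm : ∀ i ∈ Finset.range a, g i w = w := by
        intro i _
        rw [hg_apply, hπ_left _ (hWGiter i w hw), hFGiter]
      rw [hπ'_apply, Finset.sum_congr rfl hterm, Finset.sum_const, Finset.card_range,
        ← Nat.cast_smul_eq_nsmul K a w, smul_smul, inv_mul_cancel₀ haK, one_smul]
    have hπ'F : ∀ v, π' (F v) = F (π' v) := by
      intro v
      obtain ⟨b, hb⟩ : ∃ b, a = b + 1 := ⟨a - 1, (Nat.succ_pred_eq_of_pos ha).symm⟩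
      have h1 : ∀ i, g (i + 1) (F v) = F (g i v) := by
        intro i
        rw [hg_apply, hg_apply, Function.iterate_succ_apply Fe.symm, hGF,
          Function.iterate_succ_apply' F]
      have h2 : g 0 (F v) = F (g b v) := by
        rw [hg_apply, hg_apply]
        simp only [Function.iterate_zero_apply]
        calc π (F v) = π (F (F^[b] (Fe.symm^[b] v))) := by rw [hFGiter]
          _ = π (F^[a] (Fe.symm^[b] v)) := by rw [hb, Function.iterate_succ_apply' F]
          _ = π (L (Fe.symm^[b] v)) := by rw [hL]
          _ = L (π (Fe.symm^[b] v)) := hπL _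
          _ = F^[a] (π (Fe.symm^[b] v)) := hL _
          _ = F (F^[b] (π (Fe.symm^[b] v))) := by rw [hb, Function.iterate_succ_apply' F]
      have hsum : ∑ i ∈ Finset.range a, g i (F v) = ∑ i ∈ Finset.range a, F (g i v) := by
        rw [hb, Finset.sum_range_succ' (fun i => g i (F v)) b,
          Finset.sum_range_succ (fun i => F (g i v)) b, h2]
        congr 1
        exact Finset.sum_congr rfl fun i _ => h1 i
      have hFsum : F (∑ i ∈ Finset.range a, g i v) = ∑ i ∈ Finset.range a, F (g i v) :=
        map_sum (AddMonoidHom.mk' F hFadd) (fun i => g i v) (Finset.range a)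
      rw [hπ'_apply, hπ'_apply, hsum, ← hFsum, hFsemi, map_inv₀, map_natCast]
    refine ⟨LinearMap.ker π', ?_, ?_, ?_⟩
    · intro v hv
      rw [LinearMap.mem_ker] at hv ⊢
      rw [hπ'F, hv, hF0]
    · rw [Submodule.disjoint_def]
      intro x hxW hxK
      rw [LinearMap.mem_ker] at hxK
      rw [← hπ'_id x hxW, hxK]
    · rw [codisjoint_iff, eq_top_iff]
      intro v _
      refine Submodule.mem_sup.mpr ⟨π' v, hπ'W v, v - π' v, ?_, add_sub_cancel _ _⟩
      rw [LinearMap.mem_ker, map_sub, hπ'_id _ (hπ'W v), sub_self]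
  · -- F-statement → L-semisimple
    intro hFS W hW
    set P : Submodule K V → Prop := fun U => ∀ v ∈ U, L v ∈ U with hP
    set S : Set (Submodule K V) :=
      {U | P U ∧ U ≠ ⊥ ∧ ∀ U' ≤ U, P U' → U' = ⊥ ∨ U' = U} with hS
    set N : Submodule K V := sSup S with hN
    -- every nonzero invariant submodule contains a simple one
    have hmin : ∀ U : Submodule K V, P U → U ≠ ⊥ → ∃ U₀ ∈ S, U₀ ≤ U := by
      intro U hPU hUne
      obtain ⟨U₀, ⟨hU₀le, hPU₀, hU₀ne⟩, hU₀min⟩ :=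
        IsArtinian.set_has_minimal {U' : Submodule K V | U' ≤ U ∧ P U' ∧ U' ≠ ⊥}
          ⟨U, le_refl U, hPU, hUne⟩
      refine ⟨U₀, ⟨hPU₀, hU₀ne, ?_⟩, hU₀le⟩
      intro U' hU'le hPU'
      by_cases h' : U' = ⊥
      · exact Or.inl h'
      · right
        by_contra hne
        exact hU₀min U' ⟨le_trans hU'le hU₀le, hPU', h'⟩ (lt_of_le_of_ne hU'le hne)
    -- S is stable under the (semilinear) image of F
    have hLF_mem : ∀ (U : Submodule K V), P U → ∀ v ∈ Submodule.map Fₗ U,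
        L v ∈ Submodule.map Fₗ U := by
      intro U hPU v hv
      obtain ⟨u, hu, rfl⟩ := hv
      rw [hFₗ_apply, ← hFL]
      exact ⟨L u, hPU u hu, rfl⟩
    have hS_F : ∀ U ∈ S, Submodule.map Fₗ U ∈ S := by
      intro U hUS
      obtain ⟨hPU, hUne, hUsimple⟩ := hUS
      refine ⟨hLF_mem U hPU, ?_, ?_⟩
      · obtain ⟨u, hu, hune⟩ := Submodule.exists_mem_ne_zero_of_ne_bot hUne
        refine Submodule.ne_bot_iff _ |>.mpr ⟨F u, ⟨u, hu, rfl⟩, ?_⟩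
        intro h
        exact hune (hFinj (by rw [h, hF0]))
      · intro U'' hU''le hPU''
        by_cases h'' : U'' = ⊥
        · exact Or.inl h''
        right
        have hPC : P (Submodule.comap Fₗ U'' ⊓ U) := by
          intro v hv
          obtain ⟨hv1, hv2⟩ := Submodule.mem_inf.mp hv
          have hv1' : F v ∈ U'' := Submodule.mem_comap.mp hv1
          refine Submodule.mem_inf.mpr ⟨Submodule.mem_comap.mpr ?_, hPU v hv2⟩
          show F (L v) ∈ U''
          rw [hFL]
          exact hPU'' _ hv1'
        have hCne : (Submodule.comap Fₗ U'' ⊓ U) ≠ ⊥ := by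
          obtain ⟨x, hx, hxne⟩ := Submodule.exists_mem_ne_zero_of_ne_bot h''
          obtain ⟨u, hu, rfl⟩ := hU''le hx
          refine Submodule.ne_bot_iff _ |>.mpr
            ⟨u, Submodule.mem_inf.mpr ⟨Submodule.mem_comap.mpr ((hFₗ_apply u).symm ▸ hx), hu⟩, ?_⟩
          intro h
          exact hxne (by rw [hFₗ_apply, h, hF0])
        have hCU : (Submodule.comap Fₗ U'' ⊓ U) = U := by
          rcases hUsimple _ inf_le_right hPC with h | h
          · exact absurd h hCne
          · exact h
        have hUle : U ≤ Submodule.comap Fₗ U'' := by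
          rw [← hCU]; exact inf_le_left
        refine le_antisymm hU''le ?_
        calc Submodule.map Fₗ U ≤ Submodule.map Fₗ (Submodule.comap Fₗ U'') :=
              Submodule.map_mono hUle
          _ ≤ U'' := Submodule.map_comap_le _ _
    -- N is F-stable and L-stable
    have hNF : ∀ v ∈ N, F v ∈ N := by
      intro v hv
      rw [hN, sSup_eq_iSup'] at hv
      have key : ∀ (U : S), ∀ u ∈ (U : Submodule K V), F u ∈ N := by
        intro U u hu
        have h1 : F u ∈ Submodule.map Fₗ (U : Submodule K V) := ⟨u, hu, rfl⟩
        have h2 : Submodule.map Fₗ (U : Submodule K V) ≤ N := le_sSup (hS_F U U.2)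
        exact h2 h1
      refine Submodule.iSup_induction (motive := fun v => F v ∈ N)
        (fun U : S => (U : Submodule K V)) hv key ?_ ?_
      · show F 0 ∈ N
        rw [hF0]; exact Submodule.zero_mem _
      · intro x y hx hy
        show F (x + y) ∈ N
        rw [hFadd]
        exact Submodule.add_mem _ hx hy
    have hNL : P N := by
      intro v hv
      rw [hL]
      exact hiter_mem N hNF a v hv
    -- N = ⊤
    have hNtop : N = ⊤ := by
      obtain ⟨Uc, hUcF, hcompl⟩ := hFS N hNF
      by_cases hUc : Uc = ⊥
      · have := hcompl.sup_eq_top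
        rwa [hUc, sup_bot_eq] at this
      · exfalso
        have hPUc : P Uc := fun v hv => by rw [hL]; exact hiter_mem Uc hUcF a v hv
        obtain ⟨U₀, hU₀S, hU₀le⟩ := hmin Uc hPUc hUc
        have hU₀N : U₀ ≤ N := le_sSup hU₀S
        have : U₀ ≤ N ⊓ Uc := le_inf hU₀N hU₀le
        rw [hcompl.inf_eq_bot] at this
        exact hU₀S.2.1 (le_bot_iff.mp this)
    -- construct the complement for W
    obtain ⟨U, ⟨hPU, hdisj⟩, hUmax⟩ :=
      set_has_maximal_iff_noetherian.mpr inferInstance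
        {U' : Submodule K V | P U' ∧ Disjoint W U'}
        ⟨⊥, fun v hv => by
          simp only [Submodule.mem_bot] at hv ⊢
          rw [hv, map_zero], disjoint_bot_right⟩
    have hsup : W ⊔ U = ⊤ := by
      by_contra hne
      have hex : ∃ U₀ ∈ S, ¬ U₀ ≤ W ⊔ U := by
        by_contra hall
        push_neg at hall
        exact hne (top_le_iff.mp (hNtop ▸ sSup_le hall))
      obtain ⟨U₀, hU₀S, hU₀nle⟩ := hex
      have hPWU : P (W ⊔ U) := by
        intro v hv
        obtain ⟨w, hw, u, hu, rfl⟩ := Submodule.mem_sup.mp hv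
        rw [map_add]
        exact Submodule.add_mem _ (Submodule.mem_sup_left (hW w hw))
          (Submodule.mem_sup_right (hPU u hu))
      have hU₀cap : U₀ ⊓ (W ⊔ U) = ⊥ := by
        rcases hU₀S.2.2 (U₀ ⊓ (W ⊔ U)) inf_le_left
            (fun v hv => ⟨hU₀S.1 v hv.1, hPWU v hv.2⟩) with h | h
        · exact h
        · exact absurd (h ▸ inf_le_right : U₀ ≤ W ⊔ U) hU₀nle
      have hPU' : P (U ⊔ U₀) := by
        intro v hv
        obtain ⟨u, hu, s, hs, rfl⟩ := Submodule.mem_sup.mp hv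
        rw [map_add]
        exact Submodule.add_mem _ (Submodule.mem_sup_left (hPU u hu))
          (Submodule.mem_sup_right (hU₀S.1 s hs))
      have hdisj' : Disjoint W (U ⊔ U₀) := by
        rw [Submodule.disjoint_def]
        intro x hxW hxUU₀
        obtain ⟨u, hu, s, hs, hx⟩ := Submodule.mem_sup.mp hxUU₀
        have hsmem : s ∈ U₀ ⊓ (W ⊔ U) := by
          refine ⟨hs, ?_⟩
          have : s = x - u := by rw [← hx]; abel
          rw [this]
          exact Submodule.sub_mem _ (Submodule.mem_sup_left hxW) (Submodule.mem_sup_right hu)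
        rw [hU₀cap] at hsmem
        have hs0 : s = 0 := hsmem
        have hxU : x ∈ U := by rw [← hx, hs0, add_zero]; exact hu
        exact Submodule.disjoint_def.mp hdisj x hxW hxU
      have hUlt : U < U ⊔ U₀ := by
        refine lt_of_le_of_ne le_sup_left ?_
        intro h
        have : U₀ ≤ U := by rw [h]; exact le_sup_right
        exact hU₀nle (le_trans this le_sup_right)
      exact hUmax (U ⊔ U₀) ⟨hPU', hdisj'⟩ hUlt
    exact ⟨U, hPU, hdisj, codisjoint_iff.mpr hsup⟩



/-- **Paragraph 5.3 (e5).** Let `k = 𝔽_{p^a}`, `K` the fraction field of the Witt vectors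
`W(k)`, `σ : K → K` the automorphism induced by the Witt vector Frobenius, and `(V, F)` an
`F`-isocrystal over `k` (so `F` is an additive bijection of the finite-dimensional
`K`-vector space `V` with `F (c • v) = σ c • F v`).  Let `L` be the `K`-linear endomorphism
`F^a` of `V`.  Then `L` is semisimple (every `L`-invariant subspace has an `L`-invariant
complement) if and only if every `K`-subspace `W` of `V` with `F W ⊆ W` admits a
complementary subspace `W'` with `F W' ⊆ W'`. -/
theorem isocrystal_semisimple_iff_frobenius_power_semisimple
    (p a : ℕ) [Fact p.Prime] (ha : 1 ≤ a)
    (k : Type*) [Field k] [Fintype k] [CharP k p] (hk : Fintype.card k = p ^ a)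
    (V : Type*) [AddCommGroup V]
    [Module (FractionRing (WittVector p k)) V]
    [FiniteDimensional (FractionRing (WittVector p k)) V]
    (σ : FractionRing (WittVector p k) →+* FractionRing (WittVector p k))
    (hσ : ∀ x : WittVector p k,
      σ (algebraMap (WittVector p k) (FractionRing (WittVector p k)) x) =
        algebraMap (WittVector p k) (FractionRing (WittVector p k)) (WittVector.frobenius x))
    (F : V → V) (hFadd : ∀ x y, F (x + y) = F x + F y)
    (hFbij : Function.Bijective F)
    (hFsemi : ∀ (c : FractionRing (WittVector p k)) (v : V), F (c • v) = σ c • F v)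
    (L : V →ₗ[FractionRing (WittVector p k)] V) (hL : ∀ v, L v = F^[a] v) :
    (∀ W : Submodule (FractionRing (WittVector p k)) V, (∀ v ∈ W, L v ∈ W) →
        ∃ W' : Submodule (FractionRing (WittVector p k)) V,
          (∀ v ∈ W', L v ∈ W') ∧ IsCompl W W') ↔
      (∀ W : Submodule (FractionRing (WittVector p k)) V, (∀ v ∈ W, F v ∈ W) →
        ∃ W' : Submodule (FractionRing (WittVector p k)) V,
          (∀ v ∈ W', F v ∈ W') ∧ IsCompl W W') := by
  haveI : ExpChar k p := ExpChar.prime Fact.out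
  set K := FractionRing (WittVector p k) with hK
  -- σ is surjective
  have hσs : Function.Surjective σ := by
    intro x
    obtain ⟨r, s, hs, rfl⟩ := IsFractionRing.div_surjective (A := WittVector p k) x
    refine ⟨algebraMap (WittVector p k) K ((WittVector.frobeniusEquiv p k).symm r) /
      algebraMap (WittVector p k) K ((WittVector.frobeniusEquiv p k).symm s), ?_⟩
    have h1 : WittVector.frobenius ((WittVector.frobeniusEquiv p k).symm r) = r := by
      rw [← WittVector.frobeniusEquiv_apply]
      exact (WittVector.frobeniusEquiv p k).apply_symm_apply r
    have h2 : WittVector.frobenius ((WittVector.frobeniusEquiv p k).symm s) = s := by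
      rw [← WittVector.frobeniusEquiv_apply]
      exact (WittVector.frobeniusEquiv p k).apply_symm_apply s
    rw [map_div₀, hσ, hσ, h1, h2]
  -- (a : K) ≠ 0
  have haK : (a : K) ≠ 0 := by
    obtain ⟨e, m, hm, hae⟩ :=
      Nat.exists_eq_pow_mul_and_not_dvd (Nat.one_le_iff_ne_zero.mp ha) p
        (Fact.out (p := p.Prime)).ne_one
    have hp0 : (p : WittVector p k) ≠ 0 := WittVector.p_nonzero p k
    have hm0 : (m : WittVector p k) ≠ 0 := by
      intro h
      have h' := congrArg (WittVector.ghostComponent (p := p) (R := k) 0) h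
      rw [map_natCast, map_zero] at h'
      exact hm ((CharP.cast_eq_zero_iff k p m).mp h')
    have haW : (a : WittVector p k) ≠ 0 := by
      rw [hae]
      push_cast
      exact mul_ne_zero (pow_ne_zero _ hp0) hm0
    have : (a : K) = algebraMap (WittVector p k) K (a : WittVector p k) := by
      rw [map_natCast]
    rw [this]
    exact (map_ne_zero_iff _ (IsFractionRing.injective (WittVector p k) K)).mpr haW
  exact aux_semilinear_semisimple σ hσs a ha haK F hFadd hFbij hFsemi L hL
end
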